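/- arXiv:1810.03117 — 2 statements merged into one kernel-verified Lean document; each statement's English description precedes it below -/
import Mathlib

section
/- Let C be a monoidal category whose underlying category is a groupoid, with unit object 𝟙, and let a be an object of C such that Hom(𝟙, a) is nonempty. Then for any two morphisms x, y : 𝟙 ⟶ a there exists a unique morphism g : 𝟙 ⟶ 𝟙 such that (λ_𝟙).inv ≫ (g ⊗ x) ≫ (λ_a).hom = y. In other words, the action of End(𝟙) on Hom(𝟙, a) defined by g · x := (λ_𝟙).inv ≫ (g ⊗ x) ≫ (λ_a).hom is free and transitive, so Hom(𝟙, a) is an End(𝟙)-torsor. -/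
open CategoryTheory MonoidalCategory

lemma torsor_key {C : Type*} [Groupoid C] [MonoidalCategory C]
    {a : C} (x : 𝟙_ C ⟶ a) (g : 𝟙_ C ⟶ 𝟙_ C) :
    (λ_ (𝟙_ C)).inv ≫ (g ⊗ₘ x) ≫ (λ_ a).hom = g ≫ x := by
  rw [MonoidalCategory.tensorHom_def, Category.assoc, MonoidalCategory.leftUnitor_naturality,
    ← Category.assoc, ← Category.assoc]
  congr 1
  rw [unitors_inv_equal, unitors_equal, Category.assoc,
    MonoidalCategory.rightUnitor_naturality, Iso.inv_hom_id_assoc]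

/-- In a monoidal groupoid, if `Hom(𝟙, a)` is nonempty then the action of `End(𝟙)` on
`Hom(𝟙, a)` given by `g · x = (λ_𝟙).inv ≫ (g ⊗ x) ≫ (λ_a).hom` is free and transitive:
for all `x y : 𝟙 ⟶ a` there is a unique `g : 𝟙 ⟶ 𝟙` with `g · x = y`. So `Hom(𝟙, a)`
is an `End(𝟙)`-torsor. -/
theorem hom_unit_is_torsor
    {C : Type*} [Groupoid C] [MonoidalCategory C]
    (a : C) (hne : Nonempty (𝟙_ C ⟶ a)) :
    ∀ x y : 𝟙_ C ⟶ a, ∃! g : 𝟙_ C ⟶ 𝟙_ C,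
      (λ_ (𝟙_ C)).inv ≫ (g ⊗ₘ x) ≫ (λ_ a).hom = y := by
  intro x y
  refine ⟨y ≫ Groupoid.inv x, ?_, ?_⟩
  · dsimp only
    rw [torsor_key, Category.assoc, Groupoid.inv_comp, Category.comp_id]
  · intro g hg
    rw [torsor_key] at hg
    rw [← hg, Category.assoc, Groupoid.comp_inv, Category.comp_id]
end

section
/- Let A and B be C*-algebras over ℂ. Consider the simplicial set HOM(A, B) whose set of n-simplices is the set of ⋆-algebra homomorphisms from A to the C*-algebra C(Δⁿ, B) of continuous B-valued functions on the standard topological n-simplex Δⁿ = {t : Fin (n+1) → ℝ | tᵢ ≥ 0, ∑ tᵢ = 1} (with pointwise operations and supremum norm), with face and degeneracy maps induced by the affine maps between standard topological simplices coming from the morphisms of the simplex category. Then HOM(A, B) is a Kan complex: for all n ≥ 1, 0 ≤ i ≤ n, every map of simplicial sets from the horn Λⁿᵢ to HOM(A, B) extends along the inclusion Λⁿᵢ ↪ Δ[n] to a map Δ[n] → HOM(A, B). -/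
open CategoryTheory Simplicial

noncomputable section

variable {X Y : Type*} [TopologicalSpace X] [TopologicalSpace Y]

/-- Pre-composition with a continuous map `f : X → Y`, as a non-unital ⋆-algebra
homomorphism `C(Y, B) → C(X, B)`. -/
def precompStarHom (B : Type*) [NonUnitalCStarAlgebra B] (f : C(X, Y)) :
    C(Y, B) →⋆ₙₐ[ℂ] C(X, B) where
  toFun g := g.comp f
  map_smul' _ _ := rfl
  map_zero' := ContinuousMap.zero_comp f
  map_add' _ _ := rfl
  map_mul' _ _ := rfl
  map_star' _ := rfl

/-- The simplicial set `HOM(A, B)` of Definition 10.1: its `n`-simplices are the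
⋆-homomorphisms `A → C(Δⁿ, B)` into the C*-algebra of continuous `B`-valued functions on
the standard topological `n`-simplex, with face and degeneracy maps induced by the affine
maps between topological simplices. -/
def HOMC (A B : Type*) [NonUnitalCStarAlgebra A] [NonUnitalCStarAlgebra B] : SSet where
  obj n := A →⋆ₙₐ[ℂ] C((SimplexCategory.toTop.{0}.obj n.unop), B)
  map f := TypeCat.ofHom fun φ => (precompStarHom B (SimplexCategory.toTop.{0}.map f.unop).hom).comp φ
  map_id n := by
    ext φ a t
    show (φ a) (SimplexCategory.toTop.{0}.map (𝟙 n.unop) t) = (φ a) t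
    rw [SimplexCategory.toTop.map_id]
    rfl
  map_comp f g := by
    ext φ a t
    show (φ a) (SimplexCategory.toTop.{0}.map (g.unop ≫ f.unop) t) =
      (φ a) (SimplexCategory.toTop.{0}.map f.unop (SimplexCategory.toTop.{0}.map g.unop t))
    rw [SimplexCategory.toTop.map_comp]
    rfl

open SimplexCategory NNReal Finset

namespace KanHOMC

attribute [local instance] CategoryTheory.ConcreteCategory.instFunLike

/-- local model of the topological simplex, with `ℝ≥0` coordinates. -/
def toTopObj (x : SimplexCategory) : Set (Fin (x.len + 1) → ℝ≥0) :=
  { f | ∑ i, f i = 1 }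

instance (x : SimplexCategory) : CoeFun (toTopObj x) fun _ => Fin (x.len + 1) → ℝ≥0 :=
  ⟨fun f => (f : Fin (x.len + 1) → ℝ≥0)⟩

theorem toTopObj.ext {x : SimplexCategory} (f g : toTopObj x) :
    (f : Fin (x.len + 1) → ℝ≥0) = g → f = g := Subtype.ext

/-- the map induced on the local model by a morphism of `SimplexCategory`. -/
def toTopMap {x y : SimplexCategory} (f : x ⟶ y) (g : toTopObj x) : toTopObj y :=
  ⟨fun i => ∑ j ∈ Finset.univ.filter (fun j => f.toOrderHom j = i), g j, by
    show ∑ i, ∑ j ∈ Finset.univ.filter (fun j => f.toOrderHom j = i), g j = 1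
    rw [Finset.sum_fiberwise Finset.univ (fun j => f.toOrderHom j) (fun j => g j)]
    exact g.2⟩

theorem coe_toTopMap {x y : SimplexCategory} (f : x ⟶ y) (g : toTopObj x)
    (i : Fin (y.len + 1)) :
    (toTopMap f g : Fin (y.len + 1) → ℝ≥0) i
      = ∑ j ∈ Finset.univ.filter (fun j => f.toOrderHom j = i), g j := rfl

/-- the local model maps to the topological simplex. -/
def eTop (x : SimplexCategory) (t : toTopObj x) : SimplexCategory.toTop.{0}.obj x :=
  ULift.up ⟨fun k => ((t k : ℝ≥0) : ℝ), by
    have h : ∑ k, (t k : ℝ≥0) = 1 := t.2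
    refine ⟨fun k => (t k).2, ?_⟩
    show ∑ k, ((t k : ℝ≥0) : ℝ) = 1
    exact_mod_cast h⟩

/-- the underlying point of `stdSimplex`. -/
def toStd {x : SimplexCategory} (s : SimplexCategory.toTop.{0}.obj x) :
    stdSimplex ℝ (Fin (x.len + 1)) := ULift.down s

lemma toStd_nonneg {x : SimplexCategory} (s : SimplexCategory.toTop.{0}.obj x)
    (k : Fin (x.len + 1)) : 0 ≤ (toStd s).1 k := (toStd s).2.1 k

lemma toStd_sum {x : SimplexCategory} (s : SimplexCategory.toTop.{0}.obj x) :
    ∑ k, (toStd s).1 k = 1 := (toStd s).2.2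

/-- a coordinate of a point of the topological simplex, as a nonnegative real. -/
def nn {x : SimplexCategory} (s : SimplexCategory.toTop.{0}.obj x) (k : Fin (x.len + 1)) : ℝ≥0 :=
  ⟨(toStd s).1 k, toStd_nonneg s k⟩

lemma coe_nn {x : SimplexCategory} (s : SimplexCategory.toTop.{0}.obj x) (k : Fin (x.len + 1)) :
    (nn s k : ℝ) = (toStd s).1 k := rfl

/-- the inverse of `eTop`. -/
def eInv (x : SimplexCategory) (s : SimplexCategory.toTop.{0}.obj x) : toTopObj x :=
  ⟨fun k => nn s k, by
    show ∑ k, nn s k = 1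
    apply NNReal.eq
    rw [NNReal.coe_sum, NNReal.coe_one]
    simp only [coe_nn]
    exact toStd_sum s⟩

lemma eInv_eTop (x : SimplexCategory) (t : toTopObj x) : eInv x (eTop x t) = t := rfl

lemma eTop_eInv (x : SimplexCategory) (s : SimplexCategory.toTop.{0}.obj x) :
    eTop x (eInv x s) = s := rfl

lemma continuous_eTop (x : SimplexCategory) : Continuous (eTop x) := by
  refine continuous_uliftUp.comp (Continuous.subtype_mk (continuous_pi fun k => ?_) _)
  exact NNReal.continuous_coe.comp ((continuous_apply k).comp continuous_subtype_val)

lemma continuous_eInv (x : SimplexCategory) : Continuous (eInv x) := by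
  refine Continuous.subtype_mk (continuous_pi fun k => ?_) _
  exact Continuous.subtype_mk
    ((continuous_apply k).comp (continuous_subtype_val.comp continuous_uliftDown)) _

lemma toTop_map_eTop {x y : SimplexCategory} (f : x ⟶ y) (t : toTopObj x) :
    SimplexCategory.toTop.{0}.map f (eTop x t) = eTop y (toTopMap f t) := by
  apply ULift.ext
  apply Subtype.ext
  funext k
  show (FunOnFinite.linearMap ℝ ℝ (fun j => f.toOrderHom j) (fun j => ((t j : ℝ≥0) : ℝ))) k = _
  rw [FunOnFinite.linearMap_apply_apply]
  exact (NNReal.coe_sum _ _).symm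


variable {m : ℕ} (i : Fin (m + 2))

local notation "T" => toTopObj (SimplexCategory.mk (m+1))

lemma erase_nonempty : (Finset.univ.erase i).Nonempty := by
  obtain ⟨j, hj⟩ := exists_ne i
  exact ⟨j, Finset.mem_erase.2 ⟨hj, Finset.mem_univ _⟩⟩

/-- minimum of the coordinates away from `i`. -/
def mmin (t : T) : ℝ≥0 :=
  (Finset.univ.erase i).inf' (erase_nonempty i) (fun j => t j)

lemma mmin_le {t : T} {j : Fin (m + 2)} (hj : j ≠ i) : mmin i t ≤ t j :=
  Finset.inf'_le _ (Finset.mem_erase.2 ⟨hj, Finset.mem_univ _⟩)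

lemma exists_mmin (t : T) : ∃ j, j ≠ i ∧ t j = mmin i t := by
  obtain ⟨j, hj, h⟩ := Finset.exists_mem_eq_inf' (erase_nonempty i) (fun j => (t : Fin (m+2) → ℝ≥0) j)
  exact ⟨j, (Finset.mem_erase.1 hj).1, h.symm⟩

lemma continuous_mmin : Continuous (mmin i) := by
  exact Continuous.finset_inf'_apply _ fun j _ =>
    (continuous_apply j).comp continuous_subtype_val

/-- coordinates of the retraction of the simplex onto the horn. -/
def retFun (t : T) : Fin (m + 2) → ℝ≥0 := fun j =>
  if j = i then (t i + (m + 2) * mmin i t) / (1 + mmin i t)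
  else (t j - mmin i t) / (1 + mmin i t)

lemma retFun_sum (t : T) : ∑ j, retFun i t j = 1 := by
  have hsum : ∑ j, (t : Fin (m+2) → ℝ≥0) j = 1 := t.2
  have h1 : ∑ j, retFun i t j
      = (t i + (m + 2) * mmin i t) / (1 + mmin i t)
        + ∑ j ∈ Finset.univ.erase i, (t j - mmin i t) / (1 + mmin i t) := by
    rw [← Finset.add_sum_erase _ _ (Finset.mem_univ i)]
    unfold retFun
    simp only [if_pos rfl]
    congr 1
    refine Finset.sum_congr rfl fun j hj => ?_
    rw [if_neg (Finset.mem_erase.1 hj).1]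
  rw [h1, ← Finset.sum_div, ← add_div]
  have hA : ∑ j ∈ Finset.univ.erase i, ((t : Fin (m+2) → ℝ≥0) j - mmin i t)
        + ∑ _j ∈ Finset.univ.erase i, mmin i t
      = ∑ j ∈ Finset.univ.erase i, (t : Fin (m+2) → ℝ≥0) j := by
    rw [← Finset.sum_add_distrib]
    exact Finset.sum_congr rfl fun j hj =>
      tsub_add_cancel_of_le (mmin_le i (Finset.mem_erase.1 hj).1)
  have hB : t i + ∑ j ∈ Finset.univ.erase i, (t : Fin (m+2) → ℝ≥0) j = 1 := by
    rw [Finset.add_sum_erase _ _ (Finset.mem_univ i)]; exact hsum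
  have hcard : (Finset.univ.erase i).card = m + 1 := by
    rw [Finset.card_erase_of_mem (Finset.mem_univ i)]
    simp
  have hconst : ∑ _j ∈ Finset.univ.erase i, mmin i t = (m + 1) * mmin i t := by
    rw [Finset.sum_const, hcard, nsmul_eq_mul]
    norm_cast
  rw [hconst] at hA
  have hnum : t i + (m + 2) * mmin i t + ∑ j ∈ Finset.univ.erase i, (t j - mmin i t)
      = 1 + mmin i t := by
    have key : (t i + (m + 2) * mmin i t + ∑ j ∈ Finset.univ.erase i, (t j - mmin i t))
          + (m+1) * mmin i t
        = (1 + mmin i t) + (m+1) * mmin i t := by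
      calc (t i + (m + 2) * mmin i t + ∑ j ∈ Finset.univ.erase i, (t j - mmin i t))
            + (m+1) * mmin i t
          = t i + (m + 2) * mmin i t
            + (∑ j ∈ Finset.univ.erase i, (t j - mmin i t) + (m+1) * mmin i t) := by ring
        _ = t i + (m + 2) * mmin i t + ∑ j ∈ Finset.univ.erase i, (t : Fin (m+2) → ℝ≥0) j := by
            rw [hA]
        _ = (t i + ∑ j ∈ Finset.univ.erase i, (t : Fin (m+2) → ℝ≥0) j) + (m + 2) * mmin i t := by
            ring
        _ = 1 + (m + 2) * mmin i t := by rw [hB]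
        _ = (1 + mmin i t) + (m+1) * mmin i t := by ring
    exact add_right_cancel key
  rw [hnum, div_self]
  positivity

/-- The retraction of the simplex onto the horn. -/
def ret (t : T) : T := ⟨retFun i t, retFun_sum i t⟩

lemma ret_apply (t : T) (j : Fin (m+2)) :
    (ret i t : Fin (m+2) → ℝ≥0) j = if j = i then (t i + (m + 2) * mmin i t) / (1 + mmin i t)
      else (t j - mmin i t) / (1 + mmin i t) := rfl

lemma continuous_ret : Continuous (ret i) := by
  refine Continuous.subtype_mk (continuous_pi fun j => ?_) _
  have hc : Continuous fun t : T => (1 + mmin i t) := continuous_const.add (continuous_mmin i)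
  have hinv : Continuous fun t : T => (1 + mmin i t)⁻¹ := by
    refine ContinuousOn.comp_continuous (f := fun t : T => 1 + mmin i t)
      (g := fun x : ℝ≥0 => x⁻¹) (s := {0}ᶜ) ?_ hc (fun t => ?_)
    · exact ContinuousOn.inv₀ continuousOn_id fun x hx => hx
    · simp only [Set.mem_compl_iff, Set.mem_singleton_iff]
      positivity
  have hcoord : ∀ k : Fin (m+2), Continuous fun t : T => (t : Fin (m+2) → ℝ≥0) k := fun k =>
    (continuous_apply k).comp continuous_subtype_val
  show Continuous fun t : T => retFun i t j
  unfold retFun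
  split_ifs with h
  · simp only [div_eq_mul_inv]
    exact ((hcoord i).add (continuous_const.mul (continuous_mmin i))).mul hinv
  · simp only [div_eq_mul_inv]
    exact ((hcoord j).sub (continuous_mmin i)).mul hinv

lemma exists_ret_zero (t : T) : ∃ j, j ≠ i ∧ (ret i t : Fin (m+2) → ℝ≥0) j = 0 := by
  obtain ⟨j, hj, hmin⟩ := exists_mmin i t
  exact ⟨j, hj, by rw [ret_apply, if_neg hj, hmin, tsub_self, zero_div]⟩

lemma ret_eq_self {t : T} {j : Fin (m+2)} (hj : j ≠ i) (h : (t : Fin (m+2) → ℝ≥0) j = 0) :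
    ret i t = t := by
  have hmin : mmin i t = 0 := le_antisymm (h ▸ mmin_le i hj) (zero_le)
  apply toTopObj.ext
  funext k
  show retFun i t k = t k
  unfold retFun
  rw [hmin]
  split_ifs with hk
  · subst hk; simp
  · simp



attribute [local instance] CategoryTheory.ConcreteCategory.instFunLike


/-- Deleting the `j`-th coordinate (after spreading the `j`-th mass evenly), a continuous
map from the `(l+1)`-simplex to the `l`-simplex, inverse to the face inclusion on the
`j`-th face. -/
def qmap {l : ℕ} (j : Fin (l + 2)) (t : toTopObj (SimplexCategory.mk (l+1))) :
    toTopObj (SimplexCategory.mk l) :=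
  ⟨fun k => t (j.succAbove k) + t j / (l + 1), by
    show ∑ k, ((t : Fin (l+2) → ℝ≥0) (j.succAbove k) + t j / (l + 1)) = 1
    rw [Finset.sum_add_distrib, Finset.sum_const, Finset.card_univ, Fintype.card_fin,
      nsmul_eq_mul]
    have key : ∑ k : Fin (l+2), (t : Fin (l+2) → ℝ≥0) k
        = (t : Fin (l+2) → ℝ≥0) j + ∑ x : Fin (l+1), (t : Fin (l+2) → ℝ≥0) (j.succAbove x) :=
      Fin.sum_univ_succAbove _ j
    have hl : ((l : ℝ≥0) + 1) ≠ 0 := by positivity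
    have hc : ((l+1 : ℕ) : ℝ≥0) * ((t : Fin (l+2) → ℝ≥0) j / (l + 1)) = (t : Fin (l+2) → ℝ≥0) j := by
      push_cast
      rw [mul_div_cancel₀ _ hl]
    rw [hc, add_comm, ← key]
    exact t.2⟩

lemma qmap_apply {l : ℕ} (j : Fin (l + 2)) (t : toTopObj (SimplexCategory.mk (l+1)))
    (k : Fin (l+1)) :
    (qmap j t : Fin (l+1) → ℝ≥0) k = t (j.succAbove k) + t j / (l + 1) := rfl

lemma continuous_qmap {l : ℕ} (j : Fin (l + 2)) : Continuous (qmap j) := by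
  refine Continuous.subtype_mk (continuous_pi fun k => ?_) _
  have hcoord : ∀ k' : Fin (l+2),
      Continuous fun t : toTopObj (SimplexCategory.mk (l+1)) =>
        (t : Fin (l+2) → ℝ≥0) k' := fun k' =>
    (continuous_apply k').comp continuous_subtype_val
  exact (hcoord _).add ((hcoord j).div_const _)

lemma qmap_apply_of_zero {l : ℕ} {j : Fin (l + 2)}
    {t : toTopObj (SimplexCategory.mk (l+1))}
    (h : (t : Fin (l+2) → ℝ≥0) j = 0) (k : Fin (l+1)) :
    (qmap j t : Fin (l+1) → ℝ≥0) k = t (j.succAbove k) := by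
  rw [qmap_apply, h, zero_div, add_zero]

/-- coordinate `j` of a point of the `j`-th face is zero. -/
lemma toTopMap_δ_self {l : ℕ} (j : Fin (l + 2))
    (g : toTopObj (SimplexCategory.mk l)) :
    (toTopMap (δ j) g : Fin (l+2) → ℝ≥0) j = 0 := by
  classical
  rw [coe_toTopMap]
  refine Finset.sum_eq_zero fun k hk => ?_
  exact absurd ((Finset.mem_filter.1 hk).2) (Fin.succAbove_ne j k)

lemma toTopMap_δ_succAbove {l : ℕ} (j : Fin (l + 2))
    (g : toTopObj (SimplexCategory.mk l)) (k : Fin (l+1)) :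
    (toTopMap (δ j) g : Fin (l+2) → ℝ≥0) (j.succAbove k) = g k := by
  classical
  rw [coe_toTopMap]
  have hfil : ∀ k' : Fin (l+1),
      (δ j : SimplexCategory.mk l ⟶ SimplexCategory.mk (l+1)).toOrderHom k' = j.succAbove k ↔ k' = k := by
    intro k'
    show j.succAbove k' = j.succAbove k ↔ k' = k
    exact Fin.succAbove_right_inj
  have : (Finset.univ.filter
      (fun k' => (δ j : SimplexCategory.mk l ⟶ SimplexCategory.mk (l+1)).toOrderHom k' = j.succAbove k))
      = {k} := by
    ext k'
    simp [hfil]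
  rw [this, Finset.sum_singleton]

lemma qmap_toTopMap {l : ℕ} (j : Fin (l + 2))
    (g : toTopObj (SimplexCategory.mk l)) :
    qmap j (toTopMap (δ j) g) = g := by
  apply toTopObj.ext
  funext k
  rw [qmap_apply_of_zero (toTopMap_δ_self j g), toTopMap_δ_succAbove]

lemma toTopMap_qmap {l : ℕ} {j : Fin (l + 2)}
    {t : toTopObj (SimplexCategory.mk (l+1))}
    (h : (t : Fin (l+2) → ℝ≥0) j = 0) :
    toTopMap (δ j) (qmap j t) = t := by
  apply toTopObj.ext
  funext k'
  rcases eq_or_ne k' j with rfl | hk'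
  · rw [toTopMap_δ_self, h]
  · obtain ⟨k, rfl⟩ := Fin.exists_succAbove_eq hk'
    rw [toTopMap_δ_succAbove, qmap_apply_of_zero h]


section Glue

variable {m : ℕ} (i : Fin (m + 2))
variable {A B : Type*} [NonUnitalCStarAlgebra A] [NonUnitalCStarAlgebra B]
variable (σ₀ : (SSet.horn (m+1) i : SSet) ⟶ HOMC A B)

/-- A monotone map into `[m+1]` that misses `j ≠ i` defines a simplex of the horn. -/
def hornOf {k : SimplexCategoryᵒᵖ} (f : k.unop ⟶ SimplexCategory.mk (m+1)) {j : Fin (m+2)}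
    (hj : j ≠ i) (hf : ∀ x, f.toOrderHom x ≠ j) : (SSet.horn (m+1) i : SSet).obj k :=
  ⟨(SSet.stdSimplex.objEquiv).symm f, by
    intro h
    rw [Set.eq_univ_iff_forall] at h
    rcases h j with hmem | hmem
    · obtain ⟨x, hx⟩ := hmem
      exact hf x hx
    · exact hj hmem⟩

/-- The `j`-th face, as a simplex of the horn. -/
def faceσ {j : Fin (m+2)} (hj : j ≠ i) : (SSet.horn (m+1) i : SSet).obj (Opposite.op (SimplexCategory.mk m)) :=
  hornOf i (SimplexCategory.δ j) hj (fun x => Fin.succAbove_ne j x)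

/-- The value of `σ₀` on the `j`-th face. -/
def φmap {j : Fin (m+2)} (hj : j ≠ i) :
    A →⋆ₙₐ[ℂ] C((SimplexCategory.toTop.{0}.obj (SimplexCategory.mk m)), B) :=
  σ₀.app (Opposite.op (SimplexCategory.mk m)) (faceσ i hj)

/-- Unfold the type of a value of `HOMC A B`. -/
def evalHom {k : SimplexCategoryᵒᵖ} (ψ : (HOMC A B).obj k) :
    A →⋆ₙₐ[ℂ] C((SimplexCategory.toTop.{0}.obj k.unop), B) := ψ

lemma horn_map_apply {k k' : SimplexCategoryᵒᵖ} (g : k ⟶ k') (α : (SSet.horn (m+1) i : SSet).obj k)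
    (a : A) (s : (SimplexCategory.toTop.{0}.obj k'.unop)) :
    (evalHom (σ₀.app k' ((SSet.horn (m+1) i : SSet).map g α)) a) s
      = (evalHom (σ₀.app k α) a) (SimplexCategory.toTop.{0}.map g.unop s) := by
  have h2 : σ₀.app k' ((SSet.horn (m+1) i : SSet).map g α)
      = (precompStarHom B (TopCat.Hom.hom <| SimplexCategory.toTop.{0}.map g.unop)).comp (σ₀.app k α) :=
    types_congr_hom (σ₀.naturality g) α
  show (evalHom (σ₀.app k' ((SSet.horn (m+1) i : SSet).map g α))) a s = _
  rw [h2]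
  rfl

/-- Two faces agree after gluing: the case `j < k`. -/
lemma glue_lt {j k : Fin (m+2)} (hj : j ≠ i) (hk : k ≠ i) (hjk : j < k) (a : A)
    (u : toTopObj (SimplexCategory.mk (m+1)))
    (huj : (u : Fin (m+2) → ℝ≥0) j = 0) (huk : (u : Fin (m+2) → ℝ≥0) k = 0) :
    (φmap i σ₀ hj a) (eTop _ (qmap j u)) = (φmap i σ₀ hk a) (eTop _ (qmap k u)) := by
  obtain ⟨p, rfl⟩ : ∃ p, m = p + 1 := by
    rcases m with _ | p
    · exfalso
      have h1 : j.val < k.val := hjk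
      have h2 : k.val < 2 := k.isLt
      have h3 : i.val < 2 := i.isLt
      have h4 : j.val ≠ i.val := Fin.val_ne_of_ne hj
      have h5 : k.val ≠ i.val := Fin.val_ne_of_ne hk
      omega
    · exact ⟨p, rfl⟩
  have hk0 : k ≠ 0 := by
    rintro rfl
    exact absurd hjk (Fin.not_lt_zero j)
  have hjlast : j ≠ Fin.last _ := by
    rintro rfl
    exact absurd hjk (not_lt.mpr (Fin.le_last k))
  set k' : Fin (p+2) := k.pred hk0 with hk'def
  set j' : Fin (p+2) := j.castPred hjlast with hj'def
  have hsk : j.succAbove k' = k := Fin.succAbove_pred_of_lt j k hjk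
  have hsj : k.succAbove j' = j := Fin.succAbove_castPred_of_lt k j hjk
  have hδ : SimplexCategory.δ j' ≫ SimplexCategory.δ k
      = SimplexCategory.δ k' ≫ SimplexCategory.δ j := by
    have hlt : j'.castSucc < k := by
      rw [hj'def, Fin.castSucc_castPred]
      exact hjk
    have h := SimplexCategory.δ_comp_δ' hlt
    exact h
  have hpoint : ∀ x : Fin (p+1), j.succAbove (k'.succAbove x) = k.succAbove (j'.succAbove x) := by
    intro x
    have h := congr_arg (fun f => (SimplexCategory.Hom.toOrderHom f) x) hδ.symm
    simpa [SimplexCategory.δ, SimplexCategory.Hom.comp, SimplexCategory.Hom.toOrderHom_mk]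
      using h
  have hu'k' : ((qmap j u : Fin (p+2) → ℝ≥0)) k' = 0 := by
    rw [qmap_apply_of_zero huj, hsk]
    exact huk
  have hu'j' : ((qmap k u : Fin (p+2) → ℝ≥0)) j' = 0 := by
    rw [qmap_apply_of_zero huk, hsj]
    exact huj
  have hs : qmap k' (qmap j u) = qmap j' (qmap k u) := by
    apply toTopObj.ext
    funext x
    rw [qmap_apply_of_zero hu'k', qmap_apply_of_zero hu'j',
      qmap_apply_of_zero huj, qmap_apply_of_zero huk, hpoint]
  have hα : (SSet.horn _ i : SSet).map ((SimplexCategory.δ k').op) (faceσ i hj)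
      = (SSet.horn _ i : SSet).map ((SimplexCategory.δ j').op) (faceσ i hk) := by
    apply Subtype.ext
    show (SSet.stdSimplex.objEquiv).symm (SimplexCategory.δ k' ≫ SimplexCategory.δ j)
      = (SSet.stdSimplex.objEquiv).symm (SimplexCategory.δ j' ≫ SimplexCategory.δ k)
    rw [hδ]
  have e1 := horn_map_apply i σ₀ ((SimplexCategory.δ k').op) (faceσ i hj) a
      (eTop _ (qmap k' (qmap j u)))
  have e2 := horn_map_apply i σ₀ ((SimplexCategory.δ j').op) (faceσ i hk) a
      (eTop _ (qmap j' (qmap k u)))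
  have f1 : SimplexCategory.toTop.{0}.map (SimplexCategory.δ k') (eTop _ (qmap k' (qmap j u)))
      = eTop _ (qmap j u) := by rw [toTop_map_eTop, toTopMap_qmap hu'k']
  have f2 : SimplexCategory.toTop.{0}.map (SimplexCategory.δ j') (eTop _ (qmap j' (qmap k u)))
      = eTop _ (qmap k u) := by rw [toTop_map_eTop, toTopMap_qmap hu'j']
  calc (φmap i σ₀ hj a) (eTop _ (qmap j u))
      = (φmap i σ₀ hj a) (SimplexCategory.toTop.{0}.map (SimplexCategory.δ k')
          (eTop _ (qmap k' (qmap j u)))) := by rw [f1]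
    _ = (evalHom (σ₀.app _ ((SSet.horn _ i : SSet).map ((SimplexCategory.δ k').op)
          (faceσ i hj))) a) (eTop _ (qmap k' (qmap j u))) := e1.symm
    _ = (evalHom (σ₀.app _ ((SSet.horn _ i : SSet).map ((SimplexCategory.δ j').op)
          (faceσ i hk))) a) (eTop _ (qmap j' (qmap k u))) := by rw [hα, hs]
    _ = (φmap i σ₀ hk a) (SimplexCategory.toTop.{0}.map (SimplexCategory.δ j')
          (eTop _ (qmap j' (qmap k u)))) := e2
    _ = (φmap i σ₀ hk a) (eTop _ (qmap k u)) := by rw [f2]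

lemma glue {j k : Fin (m+2)} (hj : j ≠ i) (hk : k ≠ i) (a : A)
    (u : toTopObj (SimplexCategory.mk (m+1)))
    (huj : (u : Fin (m+2) → ℝ≥0) j = 0) (huk : (u : Fin (m+2) → ℝ≥0) k = 0) :
    (φmap i σ₀ hj a) (eTop _ (qmap j u)) = (φmap i σ₀ hk a) (eTop _ (qmap k u)) := by
  rcases lt_trichotomy j k with h | h | h
  · exact glue_lt i σ₀ hj hk h a u huj huk
  · subst h; rfl
  · exact (glue_lt i σ₀ hk hj h a u huk huj).symm

/-- Choice of a vanishing coordinate (away from `i`) of the retraction. -/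
def zsel (t : toTopObj (SimplexCategory.mk (m+1))) : Fin (m+2) :=
  (exists_ret_zero i t).choose

lemma zsel_spec (t : toTopObj (SimplexCategory.mk (m+1))) :
    zsel i t ≠ i ∧ (ret i t : Fin (m+2) → ℝ≥0) (zsel i t) = 0 :=
  (exists_ret_zero i t).choose_spec

/-- The filler `n`-simplex, as a bare function. -/
def Ψfun (a : A) (t : toTopObj (SimplexCategory.mk (m+1))) : B :=
  (φmap i σ₀ (zsel_spec i t).1 a) (eTop _ (qmap (zsel i t) (ret i t)))

lemma Ψfun_eq_of_zero {j : Fin (m+2)} (hj : j ≠ i) (a : A)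
    {u : toTopObj (SimplexCategory.mk (m+1))}
    (hu : (u : Fin (m+2) → ℝ≥0) j = 0) :
    Ψfun i σ₀ a u = (φmap i σ₀ hj a) (eTop _ (qmap j u)) := by
  have hr : ret i u = u := ret_eq_self i hj hu
  have hz : (u : Fin (m+2) → ℝ≥0) (zsel i u) = 0 := by
    have := (zsel_spec i u).2
    rwa [hr] at this
  unfold Ψfun
  rw [hr]
  exact glue i σ₀ (zsel_spec i u).1 hj a u hz hu

lemma cont_Ψfun (a : A) : Continuous (Ψfun i σ₀ a) := by
  classical
  set D : Fin (m+2) → Set (toTopObj (SimplexCategory.mk (m+1))) :=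
    fun j => if j = i then ∅ else {t | (ret i t : Fin (m+2) → ℝ≥0) j = 0} with hD
  have hcov : ⋃ j, D j = Set.univ := by
    rw [Set.eq_univ_iff_forall]
    intro t
    refine Set.mem_iUnion.2 ⟨zsel i t, ?_⟩
    rw [hD]
    simp only [if_neg (zsel_spec i t).1]
    exact (zsel_spec i t).2
  have hclosed : ∀ j, IsClosed (D j) := by
    intro j
    rw [hD]
    dsimp only
    split_ifs with h
    · exact isClosed_empty
    · have hc : Continuous fun t : toTopObj (SimplexCategory.mk (m+1)) =>
          (ret i t : Fin (m+2) → ℝ≥0) j :=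
        ((continuous_apply j).comp continuous_subtype_val).comp (continuous_ret i)
      exact isClosed_singleton.preimage hc
  refine LocallyFinite.continuous (locallyFinite_of_finite D) hcov hclosed ?_
  intro j
  rw [hD]
  dsimp only
  split_ifs with h
  · exact continuousOn_empty _
  · refine ContinuousOn.congr (f := fun t => (φmap i σ₀ h a) (eTop _ (qmap j (ret i t)))) ?_ ?_
    · exact ((((φmap i σ₀ h a).continuous.comp (continuous_eTop _)).comp (continuous_qmap j)).comp
        (continuous_ret i)).continuousOn
    · intro t ht
      have htj : (ret i t : Fin (m+2) → ℝ≥0) j = 0 := ht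
      calc Ψfun i σ₀ a t
          = (φmap i σ₀ (zsel_spec i t).1 a) (eTop _ (qmap (zsel i t) (ret i t))) := rfl
        _ = (φmap i σ₀ h a) (eTop _ (qmap j (ret i t))) :=
            glue i σ₀ (zsel_spec i t).1 h a (ret i t) (zsel_spec i t).2 htj

lemma cont_aux : True := trivial

/-- The filler `n`-simplex of `HOM(A,B)`. -/
def Ψ : A →⋆ₙₐ[ℂ] C((SimplexCategory.toTop.{0}.obj (SimplexCategory.mk (m+1))), B) where
  toFun a := ⟨fun s => Ψfun i σ₀ a (eInv _ s), (cont_Ψfun i σ₀ a).comp (continuous_eInv _)⟩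
  map_smul' c a := by
    ext t
    have h : Ψfun i σ₀ (c • a) (eInv _ t) = c • Ψfun i σ₀ a (eInv _ t) := by
      unfold Ψfun
      rw [map_smul]
      rfl
    exact h
  map_zero' := by
    ext t
    have h : Ψfun i σ₀ (0 : A) (eInv _ t) = 0 := by
      unfold Ψfun
      rw [map_zero]
      rfl
    exact h
  map_add' a b := by
    ext t
    have h : Ψfun i σ₀ (a + b) (eInv _ t) = Ψfun i σ₀ a (eInv _ t) + Ψfun i σ₀ b (eInv _ t) := by
      unfold Ψfun
      rw [map_add]
      rfl
    exact h
  map_mul' a b := by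
    ext t
    have h : Ψfun i σ₀ (a * b) (eInv _ t) = Ψfun i σ₀ a (eInv _ t) * Ψfun i σ₀ b (eInv _ t) := by
      unfold Ψfun
      rw [map_mul]
      rfl
    exact h
  map_star' a := by
    ext t
    have h : Ψfun i σ₀ (star a) (eInv _ t) = star (Ψfun i σ₀ a (eInv _ t)) := by
      unfold Ψfun
      rw [map_star]
      rfl
    exact h

/-- `Ψ` restricts to `σ₀` on the horn. -/
lemma ext_prop (k : SimplexCategoryᵒᵖ) (α : (SSet.horn (m+1) i : SSet).obj k) :
    σ₀.app k α = (precompStarHom B (TopCat.Hom.hom <| SimplexCategory.toTop.{0}.map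
      ((SSet.stdSimplex.objEquiv) α.1))).comp (Ψ i σ₀) := by
  obtain ⟨x⟩ := k
  obtain ⟨j, hj⟩ := (Set.ne_univ_iff_exists_notMem _).1 α.2
  rw [Set.mem_union, not_or] at hj
  obtain ⟨hjr, hji'⟩ := hj
  have hji : j ≠ i := by simpa using hji'
  set f : SimplexCategory.mk x.len ⟶ SimplexCategory.mk (m+1) :=
    (SSet.stdSimplex.objEquiv) α.1 with hf
  have hmiss : ∀ y, f.toOrderHom y ≠ j := fun y hy => hjr ⟨y, hy⟩
  set g := SimplexCategory.factor_δ f j with hg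
  have hfac : g ≫ SimplexCategory.δ j = f := SimplexCategory.factor_δ_spec f j hmiss
  have hα : α = (SSet.horn (m+1) i : SSet).map g.op (faceσ i hji) := by
    apply Subtype.ext
    show α.1 = (SSet.stdSimplex.objEquiv).symm (g ≫ SimplexCategory.δ j)
    rw [hfac, hf]
    exact ((SSet.stdSimplex.objEquiv).symm_apply_apply α.1).symm
  have hnat : σ₀.app (Opposite.op x) ((SSet.horn (m+1) i : SSet).map g.op (faceσ i hji))
      = (precompStarHom B (TopCat.Hom.hom <| SimplexCategory.toTop.{0}.map g)).comp (φmap i σ₀ hji) :=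
    types_congr_hom (σ₀.naturality g.op) (faceσ i hji)
  have goal2 : (precompStarHom B (TopCat.Hom.hom <| SimplexCategory.toTop.{0}.map g)).comp (φmap i σ₀ hji)
      = (precompStarHom B (TopCat.Hom.hom <| SimplexCategory.toTop.{0}.map f)).comp (Ψ i σ₀) := by
    ext a s
    show (φmap i σ₀ hji a) (SimplexCategory.toTop.{0}.map g s)
        = (Ψ i σ₀ a) (SimplexCategory.toTop.{0}.map f s)
    obtain ⟨s, rfl⟩ : ∃ s0, eTop _ s0 = s := ⟨eInv _ s, eTop_eInv _ s⟩
    have hfs : (SimplexCategory.toTop.{0}.map f) (eTop _ s)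
        = eTop _ (toTopMap (SimplexCategory.δ j) (toTopMap g s)) := by
      rw [← hfac, SimplexCategory.toTop.map_comp]
      show SimplexCategory.toTop.{0}.map (SimplexCategory.δ j)
        (SimplexCategory.toTop.{0}.map g (eTop _ s)) = _
      rw [toTop_map_eTop, toTop_map_eTop]
    rw [hfs, toTop_map_eTop]
    have huj : (toTopMap (SimplexCategory.δ j) (toTopMap g s)
        : Fin (m+2) → ℝ≥0) j = 0 := toTopMap_δ_self _ _
    have hΨ : (Ψ i σ₀ a) (eTop _ (toTopMap (SimplexCategory.δ j) (toTopMap g s)))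
        = (φmap i σ₀ hji a) (eTop _ (qmap j (toTopMap (SimplexCategory.δ j)
            (toTopMap g s)))) := Ψfun_eq_of_zero i σ₀ hji a huj
    rw [hΨ, qmap_toTopMap]
  rw [hα, hnat]
  exact goal2

/-- The extension of `σ₀` to the whole standard simplex. -/
def filler : Δ[m+1] ⟶ HOMC A B where
  app k := TypeCat.ofHom fun x => (precompStarHom B (TopCat.Hom.hom <| SimplexCategory.toTop.{0}.map
    ((SSet.stdSimplex.objEquiv) x))).comp (Ψ i σ₀)
  naturality k k' g := by
    refine ConcreteCategory.hom_ext _ _ fun x => ?_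
    show ((precompStarHom B (TopCat.Hom.hom <| SimplexCategory.toTop.{0}.map
        ((SSet.stdSimplex.objEquiv) (Δ[m+1].map g x)))).comp (Ψ i σ₀)
        : A →⋆ₙₐ[ℂ] C((SimplexCategory.toTop.{0}.obj k'.unop), B))
      = (precompStarHom B (TopCat.Hom.hom <| SimplexCategory.toTop.{0}.map g.unop)).comp
          ((precompStarHom B (TopCat.Hom.hom <| SimplexCategory.toTop.{0}.map
            ((SSet.stdSimplex.objEquiv) x))).comp (Ψ i σ₀))
    ext a t
    show (Ψ i σ₀ a) (SimplexCategory.toTop.{0}.map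
        (g.unop ≫ (SSet.stdSimplex.objEquiv) x) t)
      = (Ψ i σ₀ a) (SimplexCategory.toTop.{0}.map ((SSet.stdSimplex.objEquiv) x)
          (SimplexCategory.toTop.{0}.map g.unop t))
    rw [SimplexCategory.toTop.map_comp]
    rfl

lemma filler_comp : σ₀ = Λ[m+1, i].ι ≫ filler i σ₀ := by
  apply SSet.hom_ext
  intro k
  refine ConcreteCategory.hom_ext _ _ fun α => ?_
  exact ext_prop i σ₀ k α

end Glue

end KanHOMC

/-- `HOM(A, B)` is a Kan complex: for every `n ≥ 1` and `0 ≤ i ≤ n`, every map of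
simplicial sets from the horn `Λ[n, i]` to `HOM(A, B)` extends along the inclusion
`Λ[n, i] ↪ Δ[n]`. -/
theorem HOMC_isKan (A B : Type*) [NonUnitalCStarAlgebra A] [NonUnitalCStarAlgebra B] :
    ∀ (n : ℕ), 1 ≤ n → ∀ (i : Fin (n + 1)) (σ₀ : (Λ[n, i] : SSet) ⟶ HOMC A B),
      ∃ σ : Δ[n] ⟶ HOMC A B, σ₀ = Λ[n, i].ι ≫ σ := by
  intro n hn i σ₀
  obtain ⟨m, rfl⟩ : ∃ m, n = m + 1 := ⟨n - 1, by omega⟩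
  exact ⟨KanHOMC.filler i σ₀, KanHOMC.filler_comp i σ₀⟩

end
end
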